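/- For s > 1, the map ξ ↦ Λ_ph(ξ), where Λ_ph(ξ) is the smaller eigenvalue of M(ξ)⁻¹ R^s(ξ), is monotonically nondecreasing on [0, π]. -/
import Mathlib


open Real Complex Matrix Filter Topology

/-- Fourier symbol of the SIPG mass matrix (mesh size h = 1). -/
noncomputable def Msym (ξ : ℝ) : Matrix (Fin 2) (Fin 2) ℂ :=
  !![(((2 + Real.cos ξ) / 3 : ℝ) : ℂ), Complex.I * (Real.sin ξ : ℂ) / 6;
     -Complex.I * (Real.sin ξ : ℂ) / 6, (((2 - Real.cos ξ) / 12 : ℝ) : ℂ)]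

/-- Fourier symbol of the SIPG stiffness matrix with penalty parameter s (mesh size h = 1). -/
noncomputable def Rsym (s ξ : ℝ) : Matrix (Fin 2) (Fin 2) ℂ :=
  !![((4 * Real.sin (ξ / 2) ^ 2 : ℝ) : ℂ), 0;
     0, ((s - Real.cos (ξ / 2) ^ 2 : ℝ) : ℂ)]

/-- The matrix S(ξ) = M(ξ)⁻¹ R^s(ξ). -/
noncomputable def Ssym (s ξ : ℝ) : Matrix (Fin 2) (Fin 2) ℂ := (Msym ξ)⁻¹ * Rsym s ξ

/-- Λ is an eigenvalue of the 2×2 complex matrix S. -/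
def IsEigOf (S : Matrix (Fin 2) (Fin 2) ℂ) (Λ : ℂ) : Prop :=
  ∃ v : Fin 2 → ℂ, v ≠ 0 ∧ S.mulVec v = Λ • v

/-- The coefficient B(ξ) of the characteristic quadratic Λ²/12 − B Λ + C = 0. -/
noncomputable def Bcoef (s ξ : ℝ) : ℝ :=
  4 * Real.sin (ξ / 2) ^ 2 * (2 - Real.cos ξ) / 12 +
    (s - Real.cos (ξ / 2) ^ 2) * (2 + Real.cos ξ) / 3

/-- The coefficient C(ξ) of the characteristic quadratic Λ²/12 − B Λ + C = 0. -/
noncomputable def Ccoef (s ξ : ℝ) : ℝ :=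
  4 * Real.sin (ξ / 2) ^ 2 * (s - Real.cos (ξ / 2) ^ 2)

/-! ### Auxiliary lemmas -/

lemma Msym_det (ξ : ℝ) : (Msym ξ).det = 1/12 := by
  have hsc : (Real.sin ξ : ℂ)^2 + (Real.cos ξ : ℂ)^2 = 1 := by
    exact_mod_cast Real.sin_sq_add_cos_sq ξ
  rw [Msym, Matrix.det_fin_two_of]
  push_cast [-Complex.ofReal_cos, -Complex.ofReal_sin]
  linear_combination ((Real.sin ξ : ℂ)^2/36) * Complex.I_sq - (1/36) * hsc

lemma isEig_iff_det (s ξ : ℝ) (Λ : ℂ) :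
    IsEigOf (Ssym s ξ) Λ ↔ (Rsym s ξ - Λ • Msym ξ).det = 0 := by
  have hM : IsUnit (Msym ξ).det := by
    rw [Msym_det]; exact isUnit_iff_ne_zero.mpr (by norm_num)
  have key : ∀ v : Fin 2 → ℂ, (Ssym s ξ).mulVec v = Λ • v ↔
      (Rsym s ξ - Λ • Msym ξ).mulVec v = 0 := by
    intro v
    constructor
    · intro h
      have h2 : (Msym ξ).mulVec ((Ssym s ξ).mulVec v) = (Msym ξ).mulVec (Λ • v) := by rw [h]
      rw [Ssym, Matrix.mulVec_mulVec, ← Matrix.mul_assoc, Matrix.mul_nonsing_inv _ hM,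
        Matrix.one_mul, Matrix.mulVec_smul] at h2
      rw [Matrix.sub_mulVec, Matrix.smul_mulVec, h2, sub_self]
    · intro h
      rw [Matrix.sub_mulVec, Matrix.smul_mulVec, sub_eq_zero] at h
      rw [Ssym, ← Matrix.mulVec_mulVec, h, ← Matrix.mulVec_smul, Matrix.mulVec_mulVec,
        Matrix.nonsing_inv_mul _ hM, Matrix.one_mulVec]
  rw [← Matrix.exists_mulVec_eq_zero_iff]
  constructor
  · rintro ⟨v, hv, hvec⟩; exact ⟨v, hv, (key v).mp hvec⟩
  · rintro ⟨v, hv, hvec⟩; exact ⟨v, hv, (key v).mpr hvec⟩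

lemma cosEq (ξ : ℝ) : Real.cos ξ = 2 * Real.cos (ξ/2) ^ 2 - 1 := by
  have h := Real.cos_two_mul (ξ/2)
  rw [show 2 * (ξ/2) = ξ by ring] at h
  exact h

lemma sinEq (ξ : ℝ) : Real.sin ξ = 2 * Real.sin (ξ/2) * Real.cos (ξ/2) := by
  have h := Real.sin_two_mul (ξ/2)
  rw [show 2 * (ξ/2) = ξ by ring] at h
  exact h

lemma det_eq (s ξ Λ : ℝ) :
    (Rsym s ξ - (Λ:ℂ) • Msym ξ).det
      = ((Λ^2/12 - Bcoef s ξ * Λ + Ccoef s ξ : ℝ) : ℂ) := by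
  have hab : (Real.sin (ξ/2) : ℂ)^2 + (Real.cos (ξ/2) : ℂ)^2 = 1 := by
    exact_mod_cast Real.sin_sq_add_cos_sq (ξ/2)
  rw [Rsym, Msym, Bcoef, Ccoef, cosEq ξ, sinEq ξ, Matrix.det_fin_two]
  simp only [Matrix.sub_apply, Matrix.smul_apply, Matrix.of_apply, Matrix.cons_val',
    Matrix.cons_val_zero, Matrix.cons_val_one, Matrix.head_cons, Matrix.head_fin_const,
    Matrix.empty_val', Matrix.cons_val_fin_one, smul_eq_mul]
  push_cast [-Complex.ofReal_cos, -Complex.ofReal_sin]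
  linear_combination (-(Λ:ℂ)^2 * (Real.cos (ξ/2):ℂ)^2/9) * hab
    + ((Λ:ℂ)^2 * (Real.sin (ξ/2):ℂ)^2 * (Real.cos (ξ/2):ℂ)^2/9) * Complex.I_sq

lemma isEig_iff_quad (s ξ Λ : ℝ) :
    IsEigOf (Ssym s ξ) (Λ:ℂ) ↔ Λ^2/12 - Bcoef s ξ * Λ + Ccoef s ξ = 0 := by
  rw [isEig_iff_det, det_eq, Complex.ofReal_eq_zero]

lemma Bcoef_eq (s ξ : ℝ) :
    Bcoef s ξ = (2*s - 3*Real.cos ξ + s*Real.cos ξ)/3 := by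
  have h := Real.sin_sq_add_cos_sq (ξ/2)
  rw [Bcoef, cosEq ξ]
  linear_combination ((3 - 2*Real.cos (ξ/2)^2)/3) * h

lemma Ccoef_eq (s ξ : ℝ) :
    Ccoef s ξ = (1 - Real.cos ξ)*(2*s - 1 - Real.cos ξ) := by
  have h := Real.sin_sq_add_cos_sq (ξ/2)
  rw [Ccoef, cosEq ξ]
  linear_combination (4*(s - Real.cos (ξ/2)^2)) * h

set_option maxHeartbeats 1000000 in
lemma key_real (s t u x y : ℝ) (hs : 1 < s) (hu : -1 ≤ u) (hut : u ≤ t) (ht : t ≤ 1)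
    (hx : x^2/12 - (2*s - 3*t + s*t)/3 * x + (1-t)*(2*s-1-t) = 0)
    (hx2 : x ≤ 2*(2*s - 3*t + s*t))
    (hy : y^2/12 - (2*s - 3*u + s*u)/3 * y + (1-u)*(2*s-1-u) = 0)
    (hy2 : y ≤ 2*(2*s - 3*u + s*u)) : x ≤ y := by
  have htm : -1 ≤ t := le_trans hu hut
  have hu1 : u ≤ 1 := le_trans hut ht
  have hBt : 0 < 2*s - 3*t + s*t := by
    nlinarith [mul_nonneg (by linarith : (0:ℝ) ≤ s-1) (by linarith : (0:ℝ) ≤ 2+t)]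
  have hBu : 0 < 2*s - 3*u + s*u := by
    nlinarith [mul_nonneg (by linarith : (0:ℝ) ≤ s-1) (by linarith : (0:ℝ) ≤ 2+u)]
  have hCt : 0 ≤ (1-t)*(2*s-1-t) := mul_nonneg (by linarith) (by linarith)
  have hxnn : 0 ≤ x := by nlinarith [hx, hx2, hBt, hCt]
  have hxC : x * (2*s - 3*t + s*t) ≤ 6 * ((1-t)*(2*s-1-t)) := by
    nlinarith [hx, hx2, hxnn, hBt]
  have hq : 0 ≤ x^2/12 - (2*s - 3*u + s*u)/3 * x + (1-u)*(2*s-1-u) := by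
    rcases le_or_gt 3 s with h3 | h3
    · have h1 : 0 ≤ (t-u) * ((s-3)*x + 3*(2*s-t-u)) :=
        mul_nonneg (by linarith) (by nlinarith [mul_nonneg (by linarith : (0:ℝ) ≤ s-3) hxnn])
      nlinarith [hx, h1]
    · have h2 : 0 ≤ (s-1)*(4*s-3-s*t) := by
        nlinarith [mul_nonneg (by linarith : (0:ℝ) ≤ s) (by linarith : (0:ℝ) ≤ 1-t)]
      have h2b : (3-s)*(x*(2*s-3*t+s*t)) ≤ (3-s)*(6*((1-t)*(2*s-1-t))) :=
        mul_le_mul_of_nonneg_left hxC (by linarith)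
      have hstep : (3-s)*x*(2*s-3*t+s*t) ≤ 3*(2*s-t-u)*(2*s-3*t+s*t) := by
        nlinarith [h2b, h2,
          mul_le_mul_of_nonneg_right (show 6*(s-t) ≤ 3*(2*s-t-u) by linarith) hBt.le,
          sq_nonneg (s-1)]
      have h3' : (3-s)*x ≤ 3*(2*s-t-u) := by nlinarith [hstep, hBt]
      have h1 : 0 ≤ (t-u) * ((s-3)*x + 3*(2*s-t-u)) :=
        mul_nonneg (by linarith) (by linarith)
      nlinarith [hx, h1]
  have hx6Bu : x ≤ 2*(2*s - 3*u + s*u) := by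
    rcases le_or_gt s 3 with h3 | h3
    · have := mul_nonneg (by linarith : (0:ℝ) ≤ 3-s) (by linarith : (0:ℝ) ≤ t-u)
      linarith
    · have hA : 0 ≤ 2*(2*s-3*t+s*t) - x := by linarith
      have hAsq : (2*(2*s-3*t+s*t) - x)^2
          = 4*(2*s-3*t+s*t)^2 - 12*((1-t)*(2*s-1-t)) := by linear_combination 12*hx
      have hP : 4*(s-3)^2*(t-u)^2 ≤ 4*(2*s-3*t+s*t)^2 - 12*((1-t)*(2*s-1-t)) := by
        nlinarith [sq_nonneg (s-3),
          mul_nonneg (by linarith : (0:ℝ) ≤ t+1) (by nlinarith : (0:ℝ) ≤ 2*s^2+6*s-15-3*t),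
          mul_nonneg (mul_nonneg (sq_nonneg (s-3)) (by linarith : (0:ℝ) ≤ 1+u))
            (by linarith : (0:ℝ) ≤ 1+2*t-u)]
      nlinarith [hA, hAsq, hP,
        mul_nonneg (by linarith : (0:ℝ) ≤ s-3) (by linarith : (0:ℝ) ≤ t-u)]
  have hyA : (2*(2*s-3*u+s*u) - y)^2
      = 4*(2*s-3*u+s*u)^2 - 12*((1-u)*(2*s-1-u)) := by linear_combination 12*hy
  have hxA : 4*(2*s-3*u+s*u)^2 - 12*((1-u)*(2*s-1-u)) ≤ (2*(2*s-3*u+s*u) - x)^2 := by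
    nlinarith [hq]
  nlinarith [hx6Bu, hy2, hxA, hyA]

theorem Ssym_physical_eigenvalue_monotone (s : ℝ) (hs : 1 < s)
    (ξ₁ ξ₂ : ℝ) (hξ₁ : ξ₁ ∈ Set.Icc 0 Real.pi) (hξ₂ : ξ₂ ∈ Set.Icc 0 Real.pi)
    (hle : ξ₁ ≤ ξ₂) (Λ₁ Λ₂ : ℝ)
    (h₁ : IsEigOf (Ssym s ξ₁) ((Λ₁ : ℝ) : ℂ) ∧
      ∀ μ : ℝ, IsEigOf (Ssym s ξ₁) (μ : ℂ) → Λ₁ ≤ μ)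
    (h₂ : IsEigOf (Ssym s ξ₂) ((Λ₂ : ℝ) : ℂ) ∧
      ∀ μ : ℝ, IsEigOf (Ssym s ξ₂) (μ : ℂ) → Λ₂ ≤ μ) :
    Λ₁ ≤ Λ₂ := by
  obtain ⟨he₁, hmin₁⟩ := h₁
  obtain ⟨he₂, hmin₂⟩ := h₂
  have hq₁ : Λ₁^2/12 - Bcoef s ξ₁ * Λ₁ + Ccoef s ξ₁ = 0 := (isEig_iff_quad s ξ₁ Λ₁).mp he₁
  have hq₂ : Λ₂^2/12 - Bcoef s ξ₂ * Λ₂ + Ccoef s ξ₂ = 0 := (isEig_iff_quad s ξ₂ Λ₂).mp he₂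
  have hother₁ : IsEigOf (Ssym s ξ₁) ((12*Bcoef s ξ₁ - Λ₁ : ℝ) : ℂ) :=
    (isEig_iff_quad s ξ₁ _).mpr (by linear_combination hq₁)
  have hother₂ : IsEigOf (Ssym s ξ₂) ((12*Bcoef s ξ₂ - Λ₂ : ℝ) : ℂ) :=
    (isEig_iff_quad s ξ₂ _).mpr (by linear_combination hq₂)
  have hle₁ : Λ₁ ≤ 12*Bcoef s ξ₁ - Λ₁ := hmin₁ _ hother₁
  have hle₂ : Λ₂ ≤ 12*Bcoef s ξ₂ - Λ₂ := hmin₂ _ hother₂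
  have hcc : Real.cos ξ₂ ≤ Real.cos ξ₁ :=
    Real.cos_le_cos_of_nonneg_of_le_pi hξ₁.1 hξ₂.2 hle
  have hB₁ := Bcoef_eq s ξ₁
  have hB₂ := Bcoef_eq s ξ₂
  have hC₁ := Ccoef_eq s ξ₁
  have hC₂ := Ccoef_eq s ξ₂
  refine key_real s (Real.cos ξ₁) (Real.cos ξ₂) Λ₁ Λ₂ hs (Real.neg_one_le_cos ξ₂) hcc
    (Real.cos_le_one ξ₁) ?_ ?_ ?_ ?_
  · rw [← hB₁, ← hC₁]; exact hq₁
  · linarith [hle₁, hB₁.symm.le, hB₁.le]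
  · rw [← hB₂, ← hC₂]; exact hq₂
  · linarith [hle₂, hB₂.symm.le, hB₂.le]
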